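/- For every integer K ≥ 1, the partial sum satisfies ∑_{k=1}^{K} arctan(b_k) = π/4 − π/2^{K+2}. -/

import Mathlib

open Real Filter Topology

theorem partial_sum_arctan_b (a : ℕ → ℝ)
    (ha1 : a 1 = Real.sqrt 2)
    (ha : ∀ k ≥ 1, a (k + 1) = Real.sqrt (2 + a k))
    (b : ℕ → ℝ)
    (hb : ∀ k ≥ 1, b k = Real.sqrt (2 - a k) / a (k + 1)) :
    ∀ K ≥ 1, ∑ k ∈ Finset.Icc 1 K, Real.arctan (b k) = π / 4 - π / 2 ^ (K + 2) := by
  have hpi := Real.pi_pos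
  -- angles are small
  have hlt : ∀ k : ℕ, π / 2 ^ (k + 2) < π / 2 := by
    intro k
    apply div_lt_div_of_pos_left hpi (by norm_num)
    have : (2:ℝ) ^ 1 < 2 ^ (k + 2) := by
      apply pow_lt_pow_right₀ (by norm_num); omega
    simpa using this
  have hpos : ∀ k : ℕ, 0 < π / 2 ^ (k + 2) :=
    fun k => div_pos hpi (by positivity)
  have hcosk : ∀ k : ℕ, 1 ≤ k → a k = 2 * Real.cos (π / 2 ^ (k + 1)) := by
    intro k hk
    induction k with
    | zero => omega
    | succ n ih =>
      rcases Nat.lt_or_ge 1 (n + 1) with h | h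
      · have hn1 : 1 ≤ n := by omega
        have hφlt := hlt n
        have hφpos := hpos n
        have hcospos : 0 < Real.cos (π / 2 ^ (n + 2)) :=
          Real.cos_pos_of_mem_Ioo ⟨by linarith, hφlt⟩
        have hdouble : π / 2 ^ (n + 1) = 2 * (π / 2 ^ (n + 2)) := by
          rw [pow_succ]; ring
        rw [ha n hn1, ih hn1, hdouble, Real.cos_two_mul]
        have hsq : 2 + 2 * (2 * Real.cos (π / 2 ^ (n + 2)) ^ 2 - 1)
            = (2 * Real.cos (π / 2 ^ (n + 2))) ^ 2 := by ring
        rw [hsq, Real.sqrt_sq (by positivity)]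
      · have : n = 0 := by omega
        subst this
        have : π / 2 ^ (0 + 1 + 1) = π / 4 := by norm_num
        rw [ha1, this, Real.cos_pi_div_four]
        rw [eq_comm, mul_comm, div_mul_eq_mul_div, mul_comm]
        norm_num
  have harc : ∀ k : ℕ, 1 ≤ k → Real.arctan (b k) = π / 2 ^ (k + 2) := by
    intro k hk
    set φ := π / 2 ^ (k + 2) with hφ
    have hφlt := hlt k
    have hφpos := hpos k
    have hcospos : 0 < Real.cos φ := Real.cos_pos_of_mem_Ioo ⟨by linarith, hφlt⟩
    have hsinpos : 0 < Real.sin φ := Real.sin_pos_of_pos_of_lt_pi hφpos (by linarith)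
    have hdouble : π / 2 ^ (k + 1) = 2 * φ := by rw [hφ, pow_succ]; ring
    have hak1 : a (k + 1) = 2 * Real.cos φ := by
      have := hcosk (k + 1) (by omega)
      rwa [show k + 1 + 1 = k + 2 from rfl, ← hφ] at this
    have hak : a k = 2 * Real.cos (2 * φ) := by
      rw [hcosk k hk, hdouble]
    have hsq : 2 - 2 * Real.cos (2 * φ) = (2 * Real.sin φ) ^ 2 := by
      rw [Real.cos_two_mul]
      nlinarith [Real.sin_sq_add_cos_sq φ]
    have hbk : b k = Real.tan φ := by
      rw [hb k hk, hak, hak1]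
      rw [show (2:ℝ) - 2 * Real.cos (2*φ) = (2 * Real.sin φ)^2 from hsq,
        Real.sqrt_sq (by positivity), Real.tan_eq_sin_div_cos,
        mul_div_mul_left _ _ (by norm_num : (2:ℝ) ≠ 0)]
    rw [hbk, Real.arctan_tan (by linarith) hφlt]
  intro K hK
  induction K with
  | zero => omega
  | succ n ih =>
    rcases Nat.lt_or_ge 1 (n + 1) with h | h
    · have hn1 : 1 ≤ n := by omega
      rw [Finset.sum_Icc_succ_top (by omega : 1 ≤ n + 1), ih hn1,
        harc (n + 1) (by omega)]
      have : (2:ℝ) ^ (n + 1 + 2) = 2 ^ (n + 2) * 2 := by rw [pow_succ]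
      rw [show n + 1 + 2 = n + 2 + 1 from rfl, pow_succ]
      field_simp
      ring
    · have : n = 0 := by omega
      subst this
      rw [show Finset.Icc 1 1 = {1} by rfl, Finset.sum_singleton,
        harc 1 le_rfl]
      norm_num
      ring
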